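/- Let A be an endomorphism of a finite-dimensional vector space V over a field F whose minimal polynomial is f^k for a monic irreducible polynomial f of degree d. Then there exists v ∈ V such that the kd vectors (f(A))^{i₁-1} A^{i₂-1} v, for i₁ = 1,…,k and i₂ = 1,…,d, are linearly independent, and there exists an A-invariant subspace U of V with V = span{(f(A))^{i₁-1} A^{i₂-1} v} ⊕ U. -/

import Mathlib

open Polynomial DirectSum

lemma li_aux {F : Type*} [Field F] {ι : Type*} (P : ι → F[X]) (h0 : ∀ i, P i ≠ 0)
    (hinj : Function.Injective fun i => (P i).natDegree) : LinearIndependent F P := by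
  classical
  rw [linearIndependent_iff']
  intro s g hsum i hi
  by_contra hgi
  have hT : (s.filter fun j => g j ≠ 0).Nonempty := ⟨i, Finset.mem_filter.mpr ⟨hi, hgi⟩⟩
  obtain ⟨i0, hi0T, hmax⟩ := Finset.exists_max_image _ (fun j => (P j).natDegree) hT
  obtain ⟨hi0s, hgi0⟩ := Finset.mem_filter.mp hi0T
  have hc := congrArg (fun q : F[X] => q.coeff (P i0).natDegree) hsum
  simp only [Polynomial.finset_sum_coeff, Polynomial.coeff_smul, Polynomial.coeff_zero,
    smul_eq_mul] at hc
  rw [Finset.sum_eq_single i0] at hc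
  · rcases mul_eq_zero.mp hc with h | h
    · exact hgi0 h
    · exact absurd h (Polynomial.leadingCoeff_ne_zero.mpr (h0 i0))
  · intro j hj hji
    by_cases hgj : g j = 0
    · simp [hgj]
    · have hjT : j ∈ s.filter fun j => g j ≠ 0 := Finset.mem_filter.mpr ⟨hj, hgj⟩
      have hle := hmax j hjT
      have hne : (P j).natDegree ≠ (P i0).natDegree := fun h => hji (hinj h)
      rw [Polynomial.coeff_eq_zero_of_natDegree_lt (lt_of_le_of_ne hle hne), mul_zero]
  · intro h; exact absurd hi0s h

lemma span_aux {F : Type*} [Field F] (f : F[X]) (hm : f.Monic) {d : ℕ} (hd : f.natDegree = d)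
    (hd0 : 0 < d) {k : ℕ} (s : F[X])
    (hdeg : s.degree < ((k * d : ℕ) : WithBot ℕ)) :
    s ∈ Submodule.span F (Set.range fun q : Fin k × Fin d =>
      f ^ (q.1 : ℕ) * X ^ (q.2 : ℕ)) := by
  generalize hn : s.natDegree = n
  induction n using Nat.strong_induction_on generalizing s with
  | _ n IH =>
    by_cases hs : s = 0
    · simp [hs]
    · have hnlt : n < k * d := by
        have := (Polynomial.degree_eq_natDegree hs) ▸ hdeg
        exact_mod_cast hn ▸ Nat.cast_lt.mp this
      set i := n / d with hi_def
      set j := n % d with hj_def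
      have hi : i < k := (Nat.div_lt_iff_lt_mul hd0).mpr hnlt
      have hj : j < d := Nat.mod_lt _ hd0
      set g : F[X] := f ^ i * X ^ j with hg_def
      have hgmon : g.Monic := (hm.pow i).mul (monic_X_pow j)
      have hgdegn : g.natDegree = n := by
        rw [hg_def, Polynomial.natDegree_mul (hm.pow i).ne_zero (monic_X_pow j).ne_zero,
          Polynomial.natDegree_pow, hd, Polynomial.natDegree_X_pow]
        rw [hi_def, hj_def]
        exact Nat.div_add_mod' n d
      have hgmem : g ∈ Submodule.span F (Set.range fun q : Fin k × Fin d =>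
          f ^ (q.1 : ℕ) * X ^ (q.2 : ℕ)) :=
        Submodule.subset_span ⟨(⟨i, hi⟩, ⟨j, hj⟩), rfl⟩
      set lc := s.leadingCoeff with hlc
      have hlc0 : lc ≠ 0 := Polynomial.leadingCoeff_ne_zero.mpr hs
      set t := s - C lc * g with ht_def
      have hdegeq : (C lc * g).degree = s.degree := by
        rw [Polynomial.degree_C_mul hlc0, Polynomial.degree_eq_natDegree hs,
          Polynomial.degree_eq_natDegree hgmon.ne_zero, hgdegn, hn]
      have hts : s = t + C lc * g := by ring
      by_cases htz : t = 0
      · rw [hts, htz, zero_add, ← smul_eq_C_mul]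
        exact Submodule.smul_mem _ _ hgmem
      · have hdt : t.degree < s.degree := by
          apply Polynomial.degree_sub_lt hdegeq.symm hs
          rw [Polynomial.leadingCoeff_mul, Polynomial.leadingCoeff_C, hgmon.leadingCoeff, mul_one]
        have hnt : t.natDegree < n := hn ▸ Polynomial.natDegree_lt_natDegree htz hdt
        have htmem := IH t.natDegree hnt t (lt_trans hdt hdeg) rfl
        rw [hts, ← smul_eq_C_mul]
        exact Submodule.add_mem _ htmem (Submodule.smul_mem _ _ hgmem)

set_option maxHeartbeats 1000000 in
theorem stmt5 {F V : Type*} [Field F] [AddCommGroup V] [Module F V]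
    [FiniteDimensional F V]
    (A : Module.End F V) (f : Polynomial F) (k d : ℕ)
    (hmon : f.Monic) (hirr : Irreducible f) (hd : f.natDegree = d)
    (hk : 1 ≤ k) (hmin : minpoly F A = f ^ k) :
    ∃ v : V,
      LinearIndependent F (fun q : Fin k × Fin d =>
        ((Polynomial.aeval A f) ^ (q.1 : ℕ) * A ^ (q.2 : ℕ)) v) ∧
      ∃ U : Submodule F V, (∀ u ∈ U, A u ∈ U) ∧
        IsCompl (Submodule.span F (Set.range fun q : Fin k × Fin d =>
          ((Polynomial.aeval A f) ^ (q.1 : ℕ) * A ^ (q.2 : ℕ)) v)) U := by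
  classical
  have hd0 : 0 < d := hd ▸ hirr.natDegree_pos
  set e0 : V ≃ₗ[F] Module.AEval' A := Module.AEval'.of A with he0
  -- f^k kills M
  have haefk : Polynomial.aeval A (f ^ k) = 0 := hmin ▸ minpoly.aeval F A
  have hfk0 : (f ^ k : Polynomial F) ≠ 0 := pow_ne_zero _ hmon.ne_zero
  have hkill : ∀ m : Module.AEval' A, (f ^ k : Polynomial F) • m = 0 := by
    intro m
    have : (f ^ k : Polynomial F) • e0 (e0.symm m) =
        e0 (Polynomial.aeval A (f ^ k) • e0.symm m) :=
      (Module.AEval.of_aeval_smul A (f ^ k) (e0.symm m)).symm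
    simpa [haefk] using this
  have ht : Module.IsTorsion (Polynomial F) (Module.AEval' A) := fun m =>
    ⟨⟨f ^ k, mem_nonZeroDivisors_of_ne_zero hfk0⟩, hkill m⟩
  -- torsion on the ULift
  have htU : Module.IsTorsion (Polynomial F) (ULift.{u_1} (Module.AEval' A)) := by
    intro m
    obtain ⟨a, ha⟩ := @ht m.down
    exact ⟨a, by apply ULift.ext; simpa using ha⟩
  haveI : Module.Finite (Polynomial F) (ULift.{u_1} (Module.AEval' A)) :=
    Module.Finite.equiv (ULift.moduleEquiv.symm)
  obtain ⟨ι, hfin, p, hp, e, ⟨g0⟩⟩ := Module.equiv_directSum_of_isTorsion htU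
  haveI := hfin
  set G : Module.AEval' A ≃ₗ[Polynomial F]
      ⨁ i : ι, Polynomial F ⧸ (Polynomial F ∙ p i ^ e i) :=
    (ULift.moduleEquiv.symm.trans g0) with hG
  -- every p i ^ e i divides f ^ k
  have hkill' : ∀ y : ⨁ i : ι, Polynomial F ⧸ (Polynomial F ∙ p i ^ e i),
      (f ^ k : Polynomial F) • y = 0 := by
    intro y
    have h1 : (f ^ k : Polynomial F) • G (G.symm y) = G ((f ^ k : Polynomial F) • G.symm y) :=
      (map_smul G _ _).symm
    rw [G.apply_symm_apply, hkill (G.symm y), map_zero] at h1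
    exact h1
  have hdvd : ∀ i, p i ^ e i ∣ f ^ k := by
    intro i
    have h0 := hkill' (DirectSum.lof (Polynomial F) ι _ i
      (Submodule.Quotient.mk 1))
    rw [← map_smul] at h0
    have h1 := congrArg (DirectSum.component (Polynomial F) ι _ i) h0
    rw [DirectSum.component.lof_self, map_zero] at h1
    have h2 : (f ^ k : Polynomial F) • (Submodule.Quotient.mk 1 :
        Polynomial F ⧸ (Polynomial F ∙ p i ^ e i)) = Submodule.Quotient.mk (f ^ k) := by
      rw [← Submodule.Quotient.mk_smul, smul_eq_mul, mul_one]
    rw [h2, Submodule.Quotient.mk_eq_zero] at h1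
    obtain ⟨a, ha⟩ := Submodule.mem_span_singleton.mp h1
    exact ⟨a, by rw [← ha, smul_eq_mul, mul_comm]⟩
  -- some component has order exactly f ^ k
  have hassoc : ∃ i0, Associated (f ^ k) (p i0 ^ e i0) := by
    by_contra hno
    push_neg at hno
    have hdvd' : ∀ i, p i ^ e i ∣ f ^ (k - 1) := by
      intro i
      rcases Nat.eq_zero_or_pos (e i) with h0 | hpos
      · rw [h0, pow_zero]; exact one_dvd _
      · have hpf : Associated (p i) f := by
          refine (hp i).associated_of_dvd hirr ?_
          have : p i ∣ f ^ k := dvd_trans (dvd_pow_self (p i) hpos.ne') (hdvd i)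
          exact (hp i).prime.dvd_of_dvd_pow this
        have hfe : (f : Polynomial F) ^ e i ∣ f ^ k :=
          ((hpf.pow_pow (n := e i)).dvd_iff_dvd_left).mp (hdvd i)
        have he_le : e i ≤ k := (pow_dvd_pow_iff hmon.ne_zero hirr.not_isUnit).mp hfe
        have he_ne : e i ≠ k := by
          intro hek
          exact hno i (by rw [← hek]; exact (hpf.pow_pow (n := e i)).symm)
        exact dvd_trans (hpf.pow_pow (n := e i)).dvd (pow_dvd_pow f (by omega : e i ≤ k - 1))
    -- then f^(k-1) kills everything, contradiction with minimality
    have hkillk1 : ∀ y : ⨁ i : ι, Polynomial F ⧸ (Polynomial F ∙ p i ^ e i),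
        (f ^ (k - 1) : Polynomial F) • y = 0 := by
      intro y
      induction y using DirectSum.induction_on with
      | zero => simp
      | of i x =>
        obtain ⟨r, rfl⟩ := Submodule.Quotient.mk_surjective _ x
        have hz : (f ^ (k - 1) : Polynomial F) • (Submodule.Quotient.mk r :
            Polynomial F ⧸ (Polynomial F ∙ p i ^ e i)) = 0 := by
          rw [← Submodule.Quotient.mk_smul, Submodule.Quotient.mk_eq_zero]
          obtain ⟨c, hc⟩ := hdvd' i
          refine Submodule.mem_span_singleton.mpr ⟨c * r, ?_⟩
          rw [smul_eq_mul, smul_eq_mul, hc]; ring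
        rw [← DirectSum.lof_eq_of (Polynomial F), ← map_smul (DirectSum.lof (Polynomial F) ι (fun i => Polynomial F ⧸ (Polynomial F ∙ p i ^ e i)) i), hz, map_zero]
      | add x y hx hy => rw [smul_add, hx, hy, add_zero]
    have haek1 : Polynomial.aeval A (f ^ (k - 1)) = 0 := by
      ext x
      have h1 : (f ^ (k - 1) : Polynomial F) • e0 x = 0 := by
        have := hkillk1 (G (e0 x))
        rw [← map_smul] at this
        have h2 := congrArg G.symm this
        rwa [G.symm_apply_apply, map_zero] at h2
      have h3 : e0 (Polynomial.aeval A (f ^ (k - 1)) • x) = 0 := by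
        rw [Module.AEval.of_aeval_smul]; exact h1
      have h4 := congrArg e0.symm h3
      rwa [e0.symm_apply_apply, map_zero] at h4
    have hdvdmin : f ^ k ∣ f ^ (k - 1) := hmin ▸ minpoly.dvd F A haek1
    have := (pow_dvd_pow_iff hmon.ne_zero hirr.not_isUnit).mp hdvdmin
    omega
  obtain ⟨i0, hassoc0⟩ := hassoc
  have hspan : (Polynomial F ∙ p i0 ^ e i0) = Polynomial F ∙ f ^ k := by
    show Ideal.span {p i0 ^ e i0} = Ideal.span {f ^ k}
    rw [Ideal.span_singleton_eq_span_singleton]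
    exact hassoc0.symm
  -- the R-linear embedding of the i0 component
  set θR : (Polynomial F ⧸ (Polynomial F ∙ p i0 ^ e i0)) →ₗ[Polynomial F] Module.AEval' A :=
    G.symm.toLinearMap ∘ₗ DirectSum.lof (Polynomial F) ι
      (fun i => Polynomial F ⧸ (Polynomial F ∙ p i ^ e i)) i0 with hθR
  have hlofinj : Function.Injective (DirectSum.lof (Polynomial F) ι
      (fun i => Polynomial F ⧸ (Polynomial F ∙ p i ^ e i)) i0) := by
    intro a b h
    have := congrArg (DirectSum.component (Polynomial F) ι _ i0) h
    rwa [DirectSum.component.lof_self, DirectSum.component.lof_self] at this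
  have hθinj : Function.Injective θR := by
    rw [hθR]
    exact G.symm.injective.comp hlofinj
  set v : V := e0.symm (θR (Submodule.Quotient.mk 1)) with hv
  have hkey : ∀ r : Polynomial F,
      e0.symm (θR (Submodule.Quotient.mk r)) = (Polynomial.aeval A r) v := by
    intro r
    have h1 : (Submodule.Quotient.mk r : Polynomial F ⧸ (Polynomial F ∙ p i0 ^ e i0)) =
        r • Submodule.Quotient.mk 1 := by
      rw [← Submodule.Quotient.mk_smul, smul_eq_mul, mul_one]
    rw [h1, map_smul]
    rw [show ((e0.symm : Module.AEval' A ≃ₗ[F] V) = (Module.AEval.of F V A).symm) from rfl,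
      Module.AEval.of_symm_smul]
    rfl
  have hw : ∀ q : Fin k × Fin d,
      ((Polynomial.aeval A f) ^ (q.1 : ℕ) * A ^ (q.2 : ℕ)) v =
      e0.symm (θR (Submodule.Quotient.mk (f ^ (q.1 : ℕ) * X ^ (q.2 : ℕ)))) := by
    intro q
    rw [hkey]
    simp [map_mul, map_pow]
  -- the F-linear version
  set θF : (Polynomial F ⧸ (Polynomial F ∙ p i0 ^ e i0)) →ₗ[F] V :=
    (e0.symm.toLinearMap) ∘ₗ (θR.restrictScalars F) with hθF
  have hθFinj : Function.Injective θF := by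
    rw [hθF]
    exact e0.symm.injective.comp hθinj
  set polys : Fin k × Fin d → Polynomial F :=
    (fun q => f ^ (q.1 : ℕ) * X ^ (q.2 : ℕ)) with hpolys
  have hpolymon : ∀ q : Fin k × Fin d, (polys q).Monic :=
    fun q => (hmon.pow _).mul (monic_X_pow _)
  have hpolydeg : ∀ q : Fin k × Fin d, (polys q).natDegree = (q.1 : ℕ) * d + (q.2 : ℕ) := by
    intro q
    rw [hpolys]
    rw [Polynomial.natDegree_mul (hmon.pow _).ne_zero (monic_X_pow _).ne_zero,
      Polynomial.natDegree_pow, hd, Polynomial.natDegree_X_pow]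
  have hLIpolys : LinearIndependent F polys := by
    apply li_aux
    · exact fun q => (hpolymon q).ne_zero
    · intro q1 q2 h
      simp only [hpolydeg] at h
      have hj1 : (q1.2 : ℕ) < d := q1.2.isLt
      have hj2 : (q2.2 : ℕ) < d := q2.2.isLt
      have e1 : ((q1.1 : ℕ) * d + (q1.2 : ℕ)) / d = (q1.1 : ℕ) := by
        rw [Nat.mul_comm, Nat.mul_add_div hd0, Nat.div_eq_of_lt hj1, add_zero]
      have e2 : ((q2.1 : ℕ) * d + (q2.2 : ℕ)) / d = (q2.1 : ℕ) := by
        rw [Nat.mul_comm, Nat.mul_add_div hd0, Nat.div_eq_of_lt hj2, add_zero]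
      have h1 : (q1.1 : ℕ) = (q2.1 : ℕ) := by rw [← e1, ← e2, h]
      have h2 : (q1.2 : ℕ) = (q2.2 : ℕ) := by
        rw [h1] at h
        omega
      exact Prod.ext (Fin.ext h1) (Fin.ext h2)
  have hpolyspanlt : Submodule.span F (Set.range polys) ≤ Polynomial.degreeLT F (k * d) := by
    rw [Submodule.span_le]
    rintro - ⟨q, rfl⟩
    rw [SetLike.mem_coe, Polynomial.mem_degreeLT,
      Polynomial.degree_eq_natDegree (hpolymon q).ne_zero, hpolydeg, Nat.cast_lt]
    have := q.1.isLt
    have := q.2.isLt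
    nlinarith
  set mkF : Polynomial F →ₗ[F] (Polynomial F ⧸ (Polynomial F ∙ p i0 ^ e i0)) :=
    ((Polynomial F ∙ p i0 ^ e i0).mkQ).restrictScalars F with hmkF
  have hdisj : Disjoint (Submodule.span F (Set.range polys)) (LinearMap.ker mkF) := by
    rw [Submodule.disjoint_def]
    intro x hx hker
    have hxdeg : x.degree < ((k * d : ℕ) : WithBot ℕ) :=
      Polynomial.mem_degreeLT.mp (hpolyspanlt hx)
    have hxmem : x ∈ (Polynomial F ∙ p i0 ^ e i0) := by
      have := (LinearMap.mem_ker.mp hker)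
      rwa [hmkF, LinearMap.restrictScalars_apply, Submodule.mkQ_apply,
        Submodule.Quotient.mk_eq_zero] at this
    rw [hspan] at hxmem
    obtain ⟨a, ha⟩ := Submodule.mem_span_singleton.mp hxmem
    by_contra hx0
    have hdvdx : f ^ k ∣ x := ⟨a, by rw [← ha, smul_eq_mul, mul_comm]⟩
    have h1 : (f ^ k).natDegree ≤ x.natDegree := Polynomial.natDegree_le_of_dvd hdvdx hx0
    rw [Polynomial.natDegree_pow, hd] at h1
    have h2 : x.natDegree < k * d := by
      rwa [← Polynomial.natDegree_lt_iff_degree_lt hx0] at hxdeg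
    omega
  set c : Fin k × Fin d → (Polynomial F ⧸ (Polynomial F ∙ p i0 ^ e i0)) :=
    mkF ∘ polys with hc
  have hLIc : LinearIndependent F c := hLIpolys.map hdisj
  have hLIw : LinearIndependent F (θF ∘ c) := hLIc.map' θF (LinearMap.ker_eq_bot.mpr hθFinj)
  have hwc : ∀ q : Fin k × Fin d,
      ((Polynomial.aeval A f) ^ (q.1 : ℕ) * A ^ (q.2 : ℕ)) v = θF (c q) := by
    intro q
    rw [hw q]
    rfl
  -- the quotient is spanned by the classes of the polys
  have hQspan : ∀ y : (Polynomial F ⧸ (Polynomial F ∙ p i0 ^ e i0)),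
      y ∈ Submodule.span F (Set.range c) := by
    intro y
    obtain ⟨r, rfl⟩ := Submodule.Quotient.mk_surjective _ y
    have hfkmon : (f ^ k).Monic := hmon.pow k
    have hsplit : r = r %ₘ (f ^ k) + f ^ k * (r /ₘ (f ^ k)) :=
      (Polynomial.modByMonic_add_div r (f ^ k)).symm
    have hzero : (Submodule.Quotient.mk (f ^ k * (r /ₘ (f ^ k))) :
        Polynomial F ⧸ (Polynomial F ∙ p i0 ^ e i0)) = 0 := by
      rw [Submodule.Quotient.mk_eq_zero, hspan]
      exact Submodule.mem_span_singleton.mpr ⟨r /ₘ (f ^ k), by rw [smul_eq_mul, mul_comm]⟩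
    have hy : (Submodule.Quotient.mk r : Polynomial F ⧸ (Polynomial F ∙ p i0 ^ e i0)) =
        mkF (r %ₘ (f ^ k)) := by
      conv_lhs => rw [hsplit]
      rw [hmkF]
      show Submodule.Quotient.mk _ = Submodule.Quotient.mk _
      rw [← sub_eq_zero, ← Submodule.Quotient.mk_sub, add_sub_cancel_left]
      exact hzero
    rw [hy]
    have hmem : r %ₘ (f ^ k) ∈ Submodule.span F (Set.range polys) := by
      apply span_aux f hmon hd hd0
      have h1 := Polynomial.degree_modByMonic_lt r hfkmon
      rwa [Polynomial.degree_eq_natDegree hfk0, Polynomial.natDegree_pow, hd] at h1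
    have := Submodule.mem_map_of_mem (f := mkF) hmem
    rw [Submodule.map_span, ← Set.range_comp] at this
    exact this
  -- the complement
  set S1 : Submodule (Polynomial F)
      (⨁ i : ι, Polynomial F ⧸ (Polynomial F ∙ p i ^ e i)) :=
    LinearMap.range (DirectSum.lof (Polynomial F) ι
      (fun i => Polynomial F ⧸ (Polynomial F ∙ p i ^ e i)) i0) with hS1
  set S2 : Submodule (Polynomial F)
      (⨁ i : ι, Polynomial F ⧸ (Polynomial F ∙ p i ^ e i)) :=
    LinearMap.ker (DirectSum.component (Polynomial F) ι
      (fun i => Polynomial F ⧸ (Polynomial F ∙ p i ^ e i)) i0) with hS2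
  have hcompl1 : IsCompl S1 S2 := by
    constructor
    · rw [Submodule.disjoint_def]
      rintro x ⟨q, rfl⟩ hker
      rw [hS2, LinearMap.mem_ker, DirectSum.component.lof_self] at hker
      rw [hker, map_zero]
    · rw [codisjoint_iff_le_sup]
      intro x _
      set a := DirectSum.lof (Polynomial F) ι
        (fun i => Polynomial F ⧸ (Polynomial F ∙ p i ^ e i)) i0
        (DirectSum.component (Polynomial F) ι _ i0 x) with hadef
      refine Submodule.mem_sup.mpr ⟨a, ⟨_, rfl⟩, x - a, ?_, by abel⟩
      rw [hS2, LinearMap.mem_ker, map_sub, hadef, DirectSum.component.lof_self, sub_self]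
  set W' : Submodule (Polynomial F) (Module.AEval' A) :=
    Submodule.map (G.symm : _ →ₗ[Polynomial F] _) S1 with hW'
  set U' : Submodule (Polynomial F) (Module.AEval' A) :=
    Submodule.map (G.symm : _ →ₗ[Polynomial F] _) S2 with hU'
  have hcompl2 : IsCompl W' U' := (Submodule.orderIsoMapComap G.symm).isCompl hcompl1
  have hcompl3 : IsCompl (W'.restrictScalars F) (U'.restrictScalars F) := by
    constructor
    · rw [Submodule.disjoint_def]
      intro x hx1 hx2
      exact Submodule.disjoint_def.mp hcompl2.disjoint x hx1 hx2
    · rw [codisjoint_iff_le_sup]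
      intro x _
      have : x ∈ W' ⊔ U' := by
        rw [codisjoint_iff.mp hcompl2.codisjoint]
        trivial
      obtain ⟨a, ha, b, hb, rfl⟩ := Submodule.mem_sup.mp this
      exact Submodule.mem_sup.mpr ⟨a, ha, b, hb, rfl⟩
  set UV : Submodule F V := Submodule.map (e0.symm : Module.AEval' A →ₗ[F] V)
    (U'.restrictScalars F) with hUV
  set WV : Submodule F V := Submodule.map (e0.symm : Module.AEval' A →ₗ[F] V)
    (W'.restrictScalars F) with hWV
  have hcompl4 : IsCompl WV UV :=
    (Submodule.orderIsoMapComap (e0.symm : Module.AEval' A ≃ₗ[F] V)).isCompl hcompl3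
  -- range θR = W'
  have hrange : LinearMap.range θR = W' := by
    rw [hθR, hW', hS1, LinearMap.range_comp]
  -- the span equals WV
  have hspaneq : Submodule.span F (Set.range fun q : Fin k × Fin d =>
      ((Polynomial.aeval A f) ^ (q.1 : ℕ) * A ^ (q.2 : ℕ)) v) = WV := by
    apply le_antisymm
    · rw [Submodule.span_le]
      rintro - ⟨q, rfl⟩
      beta_reduce
      rw [hwc q]
      refine ⟨θR (c q), ?_, rfl⟩
      show θR (c q) ∈ W'
      rw [← hrange]
      exact ⟨c q, rfl⟩
    · rintro x ⟨m, hm, rfl⟩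
      have hm' : m ∈ W' := hm
      rw [← hrange] at hm'
      obtain ⟨y, rfl⟩ := hm' 
      have hy := hQspan y
      have h1 : θF y ∈ Submodule.map θF (Submodule.span F (Set.range c)) :=
        Submodule.mem_map_of_mem hy
      rw [Submodule.map_span, ← Set.range_comp] at h1
      have h2 : Set.range (θF ∘ c) = Set.range (fun q : Fin k × Fin d =>
          ((Polynomial.aeval A f) ^ (q.1 : ℕ) * A ^ (q.2 : ℕ)) v) := by
        apply congrArg
        funext q
        exact (hwc q).symm
      rw [h2] at h1
      exact h1
  refine ⟨v, ?_, UV, ?_, ?_⟩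
  · have : (fun q : Fin k × Fin d =>
        ((Polynomial.aeval A f) ^ (q.1 : ℕ) * A ^ (q.2 : ℕ)) v) = θF ∘ c := by
      funext q
      exact hwc q
    rw [this]
    exact hLIw
  · rintro u ⟨m, hm, rfl⟩
    refine ⟨(X : Polynomial F) • m, ?_, ?_⟩
    · show (X : Polynomial F) • m ∈ Submodule.restrictScalars F U'
      have hm' : m ∈ U' := hm
      exact Submodule.smul_mem U' _ hm'
    · exact Module.AEval.of_symm_X_smul A m
  · rw [hspaneq]
    exact hcompl4
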